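/- arXiv:2511.06416 — 2 statements merged into one kernel-verified Lean document; each statement's English description precedes it below -/
import Mathlib

section
/- Let U_1 ⊂ ... ⊂ U_d be a flag in R^p with dim U_k = q_k, and let u_1,...,u_{q_d} be an orthonormal basis adapted to the flag (so U_k = span{u_1,...,u_{q_k}}). Then the flag-trick operator P = (1/d) Σ_{k=1}^d Π_{U_k} has eigenvector u_j with eigenvalue (d − k_j + 1)/d, where k_j is the smallest index k with j ≤ q_k; vectors orthogonal to U_d have eigenvalue 0. -/
/-- let `U₁ ⊂ ⋯ ⊂ U_d` be a flag in `ℝ^p` with `dim U_k = q_k` and let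
`u₁, …, u_{q_d}` be an orthonormal basis adapted to the flag (`U_k` is spanned by the
first `q_k` vectors).  Then the flag-trick operator `P = (1/d) Σ_k Π_{U_k}` has each
`u_j` as an eigenvector with eigenvalue `(d − k_j + 1)/d`, where `k_j` is the smallest
(1-indexed) `k` with `j ≤ q_k` (below `k` is 0-indexed, so the eigenvalue reads
`(d − k)/d`); and every vector orthogonal to `U_d` is sent to `0`. -/
theorem flag_trick_eigenstructure (p d : ℕ) (hd : 0 < d)
    (q : Fin d → ℕ) (hq : StrictMono q)
    (qd : ℕ) (hqd : qd = q ⟨d - 1, Nat.sub_lt hd one_pos⟩)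
    (u : Fin qd → EuclideanSpace ℝ (Fin p)) (hu : Orthonormal ℝ u)
    (U : Fin d → Submodule ℝ (EuclideanSpace ℝ (Fin p)))
    (hU : ∀ k : Fin d,
      U k = Submodule.span ℝ {x | ∃ j : Fin qd, (j : ℕ) < q k ∧ x = u j}) :
    let P : EuclideanSpace ℝ (Fin p) →L[ℝ] EuclideanSpace ℝ (Fin p) :=
      ((d : ℝ)⁻¹) • ∑ k : Fin d, (U k).subtypeL.comp (Submodule.orthogonalProjection (U k))
    (∀ (j : Fin qd) (k : Fin d),
        (j : ℕ) < q k → (∀ k' : Fin d, (j : ℕ) < q k' → k ≤ k') →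
        P (u j) = (((d : ℝ) - (k : ℕ)) / (d : ℝ)) • u j) ∧
    (∀ x ∈ (U ⟨d - 1, Nat.sub_lt hd one_pos⟩)ᗮ, P x = 0) := by
  intro P
  have hdR : (d : ℝ) ≠ 0 := Nat.cast_ne_zero.mpr hd.ne'
  -- membership facts
  have hmem : ∀ (j : Fin qd) (k : Fin d), (j : ℕ) < q k → u j ∈ U k := by
    intro j k hj
    rw [hU k]
    exact Submodule.subset_span ⟨j, hj, rfl⟩
  have horth : ∀ (j : Fin qd) (k : Fin d), ¬ (j : ℕ) < q k → u j ∈ (U k)ᗮ := by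
    intro j k hj
    rw [hU k]
    rw [Submodule.mem_orthogonal]
    intro x hx
    refine Submodule.span_induction (p := fun x _ => inner ℝ x (u j) = (0 : ℝ)) ?_ ?_ ?_ ?_ hx
    · rintro y ⟨i, hi, rfl⟩
      have hne : i ≠ j := by
        rintro rfl; exact hj hi
      exact hu.2 hne
    · simp
    · intro a b _ _ ha hb
      rw [inner_add_left, ha, hb, add_zero]
    · intro c a _ ha
      rw [inner_smul_left, ha, mul_zero]
  constructor
  · intro j k hjk hmin
    have hproj : ∀ k' : Fin d,
        ((U k').subtypeL.comp (Submodule.orthogonalProjection (U k'))) (u j)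
          = if (j : ℕ) < q k' then u j else 0 := by
      intro k'
      by_cases h : (j : ℕ) < q k'
      · simp only [h, if_true]
        have := Submodule.starProjection_eq_self_iff.mpr (hmem j k' h)
        exact this
      · simp only [h, if_false]
        have := Submodule.orthogonalProjectionOnto_apply_of_mem_orthogonal (horth j k' h)
        simp [ContinuousLinearMap.comp_apply, this]
    have hfilter : Finset.filter (fun k' : Fin d => (j : ℕ) < q k') Finset.univ
        = Finset.Ici k := by
      ext k'
      simp only [Finset.mem_filter, Finset.mem_univ, true_and, Finset.mem_Ici]
      constructor
      · exact fun h => hmin k' h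
      · intro h
        exact lt_of_lt_of_le hjk (hq.monotone h)
    have hsum : (∑ k' : Fin d, ((U k').subtypeL.comp (Submodule.orthogonalProjection (U k'))) (u j))
        = (d - (k : ℕ)) • u j := by
      rw [← Fin.card_Ici, ← hfilter]
      rw [show (∑ k' : Fin d, ((U k').subtypeL.comp (Submodule.orthogonalProjection (U k'))) (u j))
          = ∑ k' : Fin d, if (j : ℕ) < q k' then u j else 0 from
        Finset.sum_congr rfl fun k' _ => hproj k']
      rw [← Finset.sum_filter, Finset.sum_const]
    show ((d : ℝ)⁻¹) • (∑ k' : Fin d, ((U k').subtypeL.comp (Submodule.orthogonalProjection (U k'))))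
        (u j) = _
    rw [ContinuousLinearMap.sum_apply, hsum]
    rw [← Nat.cast_smul_eq_nsmul ℝ, smul_smul]
    congr 1
    rw [Nat.cast_sub (le_of_lt k.isLt)]
    field_simp
  · intro x hx
    have hle : ∀ k : Fin d, U k ≤ U ⟨d - 1, Nat.sub_lt hd one_pos⟩ := by
      intro k
      rw [hU k, hU ⟨d - 1, Nat.sub_lt hd one_pos⟩]
      apply Submodule.span_mono
      rintro y ⟨i, hi, rfl⟩
      refine ⟨i, lt_of_lt_of_le hi (hq.monotone ?_), rfl⟩
      exact Fin.mk_le_mk.mpr (Nat.le_sub_one_of_lt k.isLt)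
    have hxz : ∀ k : Fin d,
        ((U k).subtypeL.comp (Submodule.orthogonalProjection (U k))) x = 0 := by
      intro k
      have hx' : x ∈ (U k)ᗮ := Submodule.orthogonal_le (hle k) hx
      have := Submodule.orthogonalProjectionOnto_apply_of_mem_orthogonal hx'
      simp [ContinuousLinearMap.comp_apply, this]
    show ((d : ℝ)⁻¹) • (∑ k : Fin d, ((U k).subtypeL.comp (Submodule.orthogonalProjection (U k)))) x = 0
    rw [ContinuousLinearMap.sum_apply]
    simp [hxz]
end

section
/- Let P = (1/d) Σ_{k=1}^d Π_{U_k} be the flag-trick operator of a flag U_1 ⊂ ... ⊂ U_d in R^p with distinct dimensions q_1 < ... < q_d. Then P determines the flag uniquely: if two flags with the same signature yield the same operator P, the flags are equal. (The subspaces U_k are recoverable as sums of eigenspaces of P for eigenvalues ≥ (d−k+1)/d.) -/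
/-- The orthogonal projection of `ℝ^p` onto a subspace, as an endomorphism. -/
noncomputable def projOp (p : ℕ) (U : Submodule ℝ (EuclideanSpace ℝ (Fin p))) :
    EuclideanSpace ℝ (Fin p) →L[ℝ] EuclideanSpace ℝ (Fin p) :=
  U.subtypeL.comp (U.orthogonalProjectionOnto)

lemma projOp_inner (p : ℕ) (U : Submodule ℝ (EuclideanSpace ℝ (Fin p)))
    (x : EuclideanSpace ℝ (Fin p)) :
    inner ℝ (projOp p U x) x = ‖(U.orthogonalProjectionOnto x : EuclideanSpace ℝ (Fin p))‖ ^ 2 := by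
  simp only [projOp, ContinuousLinearMap.comp_apply, Submodule.subtypeL_apply]
  set y : EuclideanSpace ℝ (Fin p) := (U.orthogonalProjectionOnto x : EuclideanSpace ℝ (Fin p)) with hy
  have h : (inner ℝ (x - y) y : ℝ) = 0 :=
    Submodule.starProjection_inner_eq_zero (K := U) x (U.orthogonalProjectionOnto x)
      (U.orthogonalProjectionOnto x).2
  have h0 : (inner ℝ y (x - y) : ℝ) = 0 := by rw [real_inner_comm]; exact h
  have hx : y + (x - y) = x := by abel
  calc (inner ℝ y x : ℝ) = inner ℝ y (y + (x - y)) := by rw [hx]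
    _ = inner ℝ y y + inner ℝ y (x - y) := inner_add_right y y (x - y)
    _ = ‖y‖ ^ 2 := by rw [h0, add_zero, real_inner_self_eq_norm_sq]

lemma sum_proj_eq_zero_iff (p : ℕ) {ι : Type*} (s : Finset ι)
    (U : ι → Submodule ℝ (EuclideanSpace ℝ (Fin p))) (x : EuclideanSpace ℝ (Fin p)) :
    (∑ k ∈ s, projOp p (U k)) x = 0 ↔ ∀ k ∈ s, x ∈ (U k)ᗮ := by
  constructor
  · intro h
    have hinner : (inner ℝ ((∑ k ∈ s, projOp p (U k)) x) x : ℝ) = 0 := by rw [h]; simp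
    rw [ContinuousLinearMap.sum_apply, sum_inner] at hinner
    have hterm : ∀ k ∈ s, (inner ℝ (projOp p (U k) x) x : ℝ) = 0 := by
      refine (Finset.sum_eq_zero_iff_of_nonneg ?_).mp hinner
      intro k _
      rw [projOp_inner]
      positivity
    intro k hk
    have := hterm k hk
    rw [projOp_inner] at this
    have hz : ((U k).orthogonalProjectionOnto x : EuclideanSpace ℝ (Fin p)) = 0 := by
      have : ‖((U k).orthogonalProjectionOnto x : EuclideanSpace ℝ (Fin p))‖ = 0 := by
        nlinarith [norm_nonneg (((U k).orthogonalProjectionOnto x : EuclideanSpace ℝ (Fin p)))]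
      simpa using this
    have : (U k).orthogonalProjectionOnto x = 0 := by
      exact Subtype.ext (by simpa using hz)
    exact (Submodule.orthogonalProjectionOnto_eq_zero_iff).mp this
  · intro h
    rw [ContinuousLinearMap.sum_apply]
    refine Finset.sum_eq_zero fun k hk => ?_
    have : (U k).orthogonalProjectionOnto x = 0 := (Submodule.orthogonalProjectionOnto_eq_zero_iff).mpr (h k hk)
    simp [projOp, this]

/-- the flag-trick operator `P = (1/d) Σ_k Π_{U_k}` determines the flag
uniquely: if two flags `U₁ ⊂ ⋯ ⊂ U_d` and `V₁ ⊂ ⋯ ⊂ V_d` of `ℝ^p` with the same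
signature `(q₁ < ⋯ < q_d)` yield the same operator `P`, then the flags are equal. -/
theorem flag_trick_determines_flag (p d : ℕ) (hd : 0 < d)
    (q : Fin d → ℕ) (hq : StrictMono q)
    (U V : Fin d → Submodule ℝ (EuclideanSpace ℝ (Fin p)))
    (hUmono : Monotone U) (hVmono : Monotone V)
    (hUdim : ∀ k, Module.finrank ℝ (U k) = q k)
    (hVdim : ∀ k, Module.finrank ℝ (V k) = q k)
    (hP : (d : ℝ)⁻¹ • ∑ k, projOp p (U k) = (d : ℝ)⁻¹ • ∑ k, projOp p (V k)) :
    U = V := by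
  have hdne : ((d : ℝ)⁻¹ : ℝ) ≠ 0 := by
    simp [Nat.cast_ne_zero]; omega
  have hsum : ∑ k, projOp p (U k) = ∑ k, projOp p (V k) := smul_right_injective _ hdne hP
  -- key step: downward induction
  have key : ∀ j : Fin d, (∀ k, j < k → U k = V k) → U j = V j := by
    intro j hjk
    have hsplit : ∀ (W : Fin d → Submodule ℝ (EuclideanSpace ℝ (Fin p))),
        ∑ k, projOp p (W k) = ∑ k ∈ Finset.Iic j, projOp p (W k)
          + ∑ k ∈ Finset.Ioi j, projOp p (W k) := by
      intro W
      rw [← Finset.sum_union (Finset.disjoint_left.mpr fun k hk hk' =>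
        absurd (Finset.mem_Iic.mp hk) (not_le.mpr (Finset.mem_Ioi.mp hk')))]
      congr 1
      ext k
      simp [le_or_gt]
    have hIoi : ∑ k ∈ Finset.Ioi j, projOp p (U k) = ∑ k ∈ Finset.Ioi j, projOp p (V k) :=
      Finset.sum_congr rfl fun k hk => by rw [hjk k (Finset.mem_Ioi.mp hk)]
    have hIic : ∑ k ∈ Finset.Iic j, projOp p (U k) = ∑ k ∈ Finset.Iic j, projOp p (V k) := by
      have := hsum
      rw [hsplit U, hsplit V, hIoi] at this
      exact add_right_cancel this
    have horth : (U j)ᗮ = (V j)ᗮ := by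
      ext x
      have h1 : x ∈ (U j)ᗮ ↔ ∀ k ∈ Finset.Iic j, x ∈ (U k)ᗮ := by
        constructor
        · intro hx k hk
          exact Submodule.orthogonal_le (hUmono (Finset.mem_Iic.mp hk)) hx
        · intro hx; exact hx j (Finset.mem_Iic.mpr le_rfl)
      have h2 : x ∈ (V j)ᗮ ↔ ∀ k ∈ Finset.Iic j, x ∈ (V k)ᗮ := by
        constructor
        · intro hx k hk
          exact Submodule.orthogonal_le (hVmono (Finset.mem_Iic.mp hk)) hx
        · intro hx; exact hx j (Finset.mem_Iic.mpr le_rfl)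
      rw [h1, h2, ← sum_proj_eq_zero_iff, ← sum_proj_eq_zero_iff, hIic]
    have := congrArg (fun W : Submodule ℝ (EuclideanSpace ℝ (Fin p)) => Wᗮ) horth
    simpa [Submodule.orthogonal_orthogonal] using this
  have all : ∀ m : ℕ, ∀ j : Fin d, d ≤ j.val + m + 1 → U j = V j := by
    intro m
    induction m with
    | zero =>
      intro j hj
      refine key j fun k hk => absurd hk ?_
      have := k.isLt
      simp only [not_lt, Fin.le_def]
      omega
    | succ n ih =>
      intro j hj
      refine key j fun k hk => ih k ?_
      have := Fin.lt_def.mp hk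
      omega
  funext j
  exact all d j (by omega)
end
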